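/- Let M be a combinatorial model category and κ a sufficiently large regular cardinal such that M admits κ-accessible functorial factorizations and generating cofibrations with κ-presentable domains and codomains. Then κ-filtered colimits in M preserve weak equivalences. -/

import Mathlib

universe w v u

open CategoryTheory CategoryTheory.Limits Opposite

namespace Paper

variable {C : Type u} [Category.{v} C]

/-- `g` is a retract of `f` in the arrow category. -/
def IsRetractOfArrow {X Y A B : C} (g : X ⟶ Y) (f : A ⟶ B) : Prop :=
  ∃ (i : X ⟶ A) (r : A ⟶ X) (i' : Y ⟶ B) (r' : B ⟶ Y),
    i ≫ r = 𝟙 X ∧ i' ≫ r' = 𝟙 Y ∧ i ≫ f = g ≫ i' ∧ r ≫ g = f ≫ r'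

/-- `f` is a pushout of some morphism belonging to `I`. -/
def IsPushoutOfElem (I : MorphismProperty C) {X Y : C} (f : X ⟶ Y) : Prop :=
  ∃ (A B : C) (g : A ⟶ B) (h : A ⟶ X) (k : B ⟶ Y), I g ∧ IsPushout g h k f

/-- The inclusion of the interval `[⊥, j)` into a preorder. -/
def ltInclusion {J : Type w} [Preorder J] (j : J) : Set.Iio j ⥤ J :=
  (show Monotone (fun k : Set.Iio j => (k : J)) from fun _ _ h => h).functor

/-- The canonical cocone on the restriction of `F` to `[⊥, j)`, with vertex `F.obj j`. -/
@[simps]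
def coconeLT {J : Type w} [Preorder J] (F : J ⥤ C) (j : J) :
    Limits.Cocone (ltInclusion j ⋙ F) where
  pt := F.obj j
  ι :=
    { app := fun k => F.map (homOfLE (le_of_lt k.2))
      naturality := fun k l h => by
        dsimp [ltInclusion]
        erw [← F.map_comp, Category.comp_id]
        congr 1 }

/-- A witness that `f` is a transfinite composition of pushouts of morphisms of `I`:
a colimit-preserving well-ordered chain starting at the source of `f`, each successor
step of which is a pushout of a morphism of `I`, whose composition is `f`. -/
structure TransfiniteCompositionWitness (I : MorphismProperty C) {X Y : C} (f : X ⟶ Y) where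
  J : Type v
  [linOrd : LinearOrder J]
  [orderBot : OrderBot J]
  [succOrder : SuccOrder J]
  [wellFounded : WellFoundedLT J]
  F : J ⥤ C
  c : Limits.Cocone F
  isColimit : Limits.IsColimit c
  isoBot : X ≅ F.obj ⊥
  isoPt : c.pt ≅ Y
  fac : f = isoBot.hom ≫ c.ι.app ⊥ ≫ isoPt.hom
  succ : ∀ j : J, ¬ IsMax j → IsPushoutOfElem I (F.map (homOfLE (Order.le_succ j)))
  limit : ∀ j : J, Order.IsSuccLimit j → Nonempty (Limits.IsColimit (coconeLT F j))

/-- `cell I`: the class of transfinite compositions of pushouts of morphisms of `I`. -/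
def transfiniteCell (I : MorphismProperty C) : MorphismProperty C :=
  fun _ _ f => Nonempty (TransfiniteCompositionWitness I f)

/-- `inj I`: the class of morphisms with the right lifting property with respect to `I`. -/
def injClass (I : MorphismProperty C) : MorphismProperty C :=
  fun _ _ q => ∀ ⦃A B : C⦄ (g : A ⟶ B), I g → HasLiftingProperty g q

/-- `cof I`: the class of morphisms with the left lifting property with respect to `inj I`. -/
def cofClass (I : MorphismProperty C) : MorphismProperty C :=
  fun _ _ f => ∀ ⦃X Y : C⦄ (q : X ⟶ Y), injClass I q → HasLiftingProperty f q

/-- A category `J` is `κ`-filtered if every diagram indexed by a small category with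
fewer than `κ` arrows admits a cocone. -/
def IsCardinalFiltered (J : Type v) [Category.{v} J] (κ : Cardinal.{v}) : Prop :=
  ∀ (A : Type v) [SmallCategory A], Cardinal.mk (Arrow A) < κ →
    ∀ F : A ⥤ J, Nonempty (Limits.Cocone F)

/-- An object `X` is `κ`-presentable if its corepresentable functor preserves
`κ`-filtered colimits. -/
def IsPresentableObj (κ : Cardinal.{v}) (X : C) : Prop :=
  ∀ (J : Type v) [SmallCategory J], IsCardinalFiltered J κ →
    Nonempty (Limits.PreservesColimitsOfShape J (coyoneda.obj (Opposite.op X)))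

/-- A presentation of `X` as a `κ`-filtered colimit of objects belonging to `G`. -/
structure FilteredColimitPresentation (κ : Cardinal.{v}) (G : Set C) (X : C) where
  J : Type v
  [cat : SmallCategory J]
  filtered : IsCardinalFiltered J κ
  F : J ⥤ C
  mem : ∀ j, F.obj j ∈ G
  c : Limits.Cocone F
  isColimit : Limits.IsColimit c
  iso : c.pt ≅ X

/-- A category is locally `κ`-presentable if it is cocomplete and has a small set of
`κ`-presentable objects of which every object is a `κ`-filtered colimit. -/
structure IsLocallyPresentableCat (κ : Cardinal.{v}) (C : Type u) [Category.{v} C] : Prop where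
  hasColimits : Limits.HasColimits C
  generators : ∃ G : Set C, Small.{v} G ∧ (∀ X ∈ G, IsPresentableObj κ X) ∧
    ∀ X : C, Nonempty (FilteredColimitPresentation κ G X)

/-- A class of morphisms is small if it is, up to isomorphism in the arrow category,
indexed by a small type. -/
def MorphismPropertyIsSmall (I : MorphismProperty C) : Prop :=
  ∃ (ι : Type v) (f : ι → Arrow C), ∀ g : Arrow C, I g.hom ↔ ∃ i, Nonempty (f i ≅ g)

/-- A model structure on a category: weak equivalences, cofibrations and fibrations,
subject to the two-out-of-three, retract, lifting and factorization axioms. -/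
structure ModelStructure (C : Type u) [Category.{v} C] : Type (max u v) where
  W : MorphismProperty C
  Cof : MorphismProperty C
  Fib : MorphismProperty C
  w_of_iso : ∀ {X Y : C} (f : X ⟶ Y), IsIso f → W f
  cof_of_iso : ∀ {X Y : C} (f : X ⟶ Y), IsIso f → Cof f
  fib_of_iso : ∀ {X Y : C} (f : X ⟶ Y), IsIso f → Fib f
  w_comp : ∀ {X Y Z : C} (f : X ⟶ Y) (g : Y ⟶ Z), W f → W g → W (f ≫ g)
  w_cancel_left : ∀ {X Y Z : C} (f : X ⟶ Y) (g : Y ⟶ Z), W f → W (f ≫ g) → W g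
  w_cancel_right : ∀ {X Y Z : C} (f : X ⟶ Y) (g : Y ⟶ Z), W g → W (f ≫ g) → W f
  cof_comp : ∀ {X Y Z : C} (f : X ⟶ Y) (g : Y ⟶ Z), Cof f → Cof g → Cof (f ≫ g)
  fib_comp : ∀ {X Y Z : C} (f : X ⟶ Y) (g : Y ⟶ Z), Fib f → Fib g → Fib (f ≫ g)
  w_retract : ∀ {X Y A B : C} (g : X ⟶ Y) (f : A ⟶ B),
    IsRetractOfArrow g f → W f → W g
  cof_retract : ∀ {X Y A B : C} (g : X ⟶ Y) (f : A ⟶ B),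
    IsRetractOfArrow g f → Cof f → Cof g
  fib_retract : ∀ {X Y A B : C} (g : X ⟶ Y) (f : A ⟶ B),
    IsRetractOfArrow g f → Fib f → Fib g
  lift_trivCof_fib : ∀ {A B X Y : C} (i : A ⟶ B) (p : X ⟶ Y),
    Cof i → W i → Fib p → HasLiftingProperty i p
  lift_cof_trivFib : ∀ {A B X Y : C} (i : A ⟶ B) (p : X ⟶ Y),
    Cof i → Fib p → W p → HasLiftingProperty i p
  fact_cof_trivFib : ∀ {X Y : C} (f : X ⟶ Y),
    ∃ (Z : C) (i : X ⟶ Z) (p : Z ⟶ Y), Cof i ∧ Fib p ∧ W p ∧ i ≫ p = f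
  fact_trivCof_fib : ∀ {X Y : C} (f : X ⟶ Y),
    ∃ (Z : C) (i : X ⟶ Z) (p : Z ⟶ Y), Cof i ∧ W i ∧ Fib p ∧ i ≫ p = f

variable {D : Type u} [Category.{v} D]

/-- An object is fibrant if the morphism to the terminal object is a fibration. -/
def ModelStructure.Fibrant [Limits.HasTerminal C] (M : ModelStructure C) (X : C) : Prop :=
  M.Fib (Limits.terminal.from X)

/-- An object is cofibrant if the morphism from the initial object is a cofibration. -/
def ModelStructure.Cofibrant [Limits.HasInitial C] (M : ModelStructure C) (X : C) : Prop :=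
  M.Cof (Limits.initial.to X)


section Aux

open CategoryTheory CategoryTheory.Limits

variable {C : Type u} [Category.{v} C]

lemma isFiltered_of_cardinalFiltered {A : Type v} [SmallCategory A] {κ : Cardinal.{v}}
    (hκ : κ.IsRegular) (hA : IsCardinalFiltered A κ) : IsFiltered A := by
  apply IsFiltered.of_cocone_nonempty.{v}
  intro J _ _ F
  apply hA
  haveI : Finite (Arrow J) := Finite.of_equiv (Σ p : J × J, p.1 ⟶ p.2)
    { toFun := fun x => Arrow.mk x.2
      invFun := fun f => ⟨(f.left, f.right), f.hom⟩
      left_inv := fun _ => rfl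
      right_inv := fun _ => rfl }
  exact lt_of_lt_of_le (Cardinal.lt_aleph0_of_finite _) hκ.aleph0_le

lemma fib_w_of_injClass (M : ModelStructure C) (I : MorphismProperty C)
    (hIgen : ∀ ⦃Q R : C⦄ (c : Q ⟶ R), M.Cof c ↔ cofClass I c)
    {X Y : C} (q : X ⟶ Y) (hq : injClass I q) : M.Fib q ∧ M.W q := by
  obtain ⟨Z, i, p, hi, hp, hw, fac⟩ := M.fact_cof_trivFib q
  haveI hlift : HasLiftingProperty i q := (hIgen i).mp hi q hq
  have sq : CommSq (𝟙 X) i q p := ⟨by simp [fac]⟩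
  obtain ⟨⟨⟨r, hr1, hr2⟩⟩⟩ := hlift.sq_hasLift sq
  have hret : IsRetractOfArrow q p :=
    ⟨i, r, 𝟙 Y, 𝟙 Y, hr1, by simp, by simp [fac], by simp [hr2]⟩
  exact ⟨M.fib_retract q p hret hp, M.w_retract q p hret hw⟩

lemma injClass_of_colimit {κ : Cardinal.{v}} (hκ : κ.IsRegular) (I : MorphismProperty C)
    (hIpres : ∀ ⦃Q R : C⦄ (c : Q ⟶ R), I c →
      IsPresentableObj κ Q ∧ IsPresentableObj κ R)
    {A : Type v} [SmallCategory A] (hA : IsCardinalFiltered A κ)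
    {H G : A ⥤ C} (p : H ⟶ G) (cH : Cocone H) (cG : Cocone G)
    (hH : IsColimit cH) (hG : IsColimit cG) (hp : ∀ a, injClass I (p.app a))
    {q : cH.pt ⟶ cG.pt} (hcomm : ∀ a, cH.ι.app a ≫ q = p.app a ≫ cG.ι.app a) :
    injClass I q := by
  haveI : IsFiltered A := isFiltered_of_cardinalFiltered hκ hA
  intro Q R g hg
  haveI pQ : PreservesColimitsOfShape A (coyoneda.obj (op Q)) := ((hIpres g hg).1 A hA).some
  haveI pR : PreservesColimitsOfShape A (coyoneda.obj (op R)) := ((hIpres g hg).2 A hA).some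
  constructor
  intro u v sq
  -- descend u : Q ⟶ cH.pt to some stage
  obtain ⟨a, tu, htu⟩ := Types.jointly_surjective (H ⋙ coyoneda.obj (op Q))
    (isColimitOfPreserves (coyoneda.obj (op Q)) hH) u
  obtain ⟨a', bv, hbv⟩ := Types.jointly_surjective (G ⋙ coyoneda.obj (op R))
    (isColimitOfPreserves (coyoneda.obj (op R)) hG) v
  -- move to a common stage c
  obtain ⟨c, tu', bv', htu', hbv'⟩ :
      ∃ (c : A) (t' : Q ⟶ H.obj c) (b' : R ⟶ G.obj c),
        t' ≫ cH.ι.app c = u ∧ b' ≫ cG.ι.app c = v :=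
    ⟨IsFiltered.max a a', tu ≫ H.map (IsFiltered.leftToMax a a'),
      bv ≫ G.map (IsFiltered.rightToMax a a'),
      by rw [Category.assoc, cH.w]; exact htu,
      by rw [Category.assoc, cG.w]; exact hbv⟩
  -- the two candidate maps Q ⟶ cG.pt agree
  have key : (tu' ≫ p.app c) ≫ cG.ι.app c = (g ≫ bv') ≫ cG.ι.app c := by
    rw [Category.assoc, ← hcomm c, ← Category.assoc, htu', sq.w, Category.assoc, hbv']
  -- equalize at a later stage
  have key' := (Types.FilteredColimit.isColimit_eq_iff (G ⋙ coyoneda.obj (op Q))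
    (isColimitOfPreserves (coyoneda.obj (op Q)) hG)
    (xi := tu' ≫ p.app c) (xj := g ≫ bv')).mp key
  obtain ⟨k, f1, f2, hk⟩ := key'
  have hk' : (tu' ≫ p.app c) ≫ G.map f1 = (g ≫ bv') ≫ G.map f2 := hk
  obtain ⟨k', w1, hweq⟩ :
      ∃ (k' : A) (w1 : c ⟶ k'),
        (tu' ≫ p.app c) ≫ G.map w1 = (g ≫ bv') ≫ G.map w1 := by
    refine ⟨IsFiltered.coeq f1 f2, f1 ≫ IsFiltered.coeqHom f1 f2, ?_⟩
    conv_rhs => rw [IsFiltered.coeq_condition f1 f2]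
    simp only [G.map_comp, ← Category.assoc]
    rw [hk']
  -- set up the lifting problem at the stage `k'`
  have sq2 : CommSq (tu' ≫ H.map w1) g (p.app k') (bv' ≫ G.map w1) := by
    constructor
    rw [Category.assoc, p.naturality w1, ← Category.assoc, hweq]
    simp only [Category.assoc]
  haveI := hp k' g hg
  obtain ⟨⟨⟨l, hl1, hl2⟩⟩⟩ := HasLiftingProperty.sq_hasLift sq2
  refine ⟨⟨⟨l ≫ cH.ι.app k', ?_, ?_⟩⟩⟩
  · rw [← Category.assoc, hl1, Category.assoc, cH.w]
    exact htu'
  · rw [Category.assoc, hcomm, ← Category.assoc, hl2, Category.assoc, cG.w]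
    exact hbv'

variable {A : Type v} [SmallCategory A] {F G : A ⥤ C}

/-- The diagram of arrows associated to a natural transformation. -/
@[simps]
def arrowDiagram (τ : F ⟶ G) : A ⥤ Arrow C where
  obj a := Arrow.mk (τ.app a)
  map {a a'} φ := Arrow.homMk (u := F.map φ) (v := G.map φ) (τ.naturality φ)
  map_id a := by apply Arrow.hom_ext <;> simp
  map_comp φ ψ := by apply Arrow.hom_ext <;> simp

/-- The arrow cocone over `arrowDiagram τ` built from cocones on `F` and `G`. -/
@[simps]
def arrowCocone (τ : F ⟶ G) (cF : Cocone F) (cG : Cocone G) (hF : IsColimit cF) :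
    Cocone (arrowDiagram τ) where
  pt := Arrow.mk (hF.desc ((Cocone.precompose τ).obj cG))
  ι :=
    { app := fun a => Arrow.homMk (u := cF.ι.app a) (v := cG.ι.app a)
        (by exact hF.fac ((Cocone.precompose τ).obj cG) a)
      naturality := fun a a' φ => by
        apply Arrow.hom_ext
        · exact (cF.w φ).trans (Category.comp_id _).symm
        · exact (cG.w φ).trans (Category.comp_id _).symm }

/-- The auxiliary left cocone on `F` obtained from a cocone on `arrowDiagram τ`. -/
@[simps]
def leftCocone (τ : F ⟶ G) (s : Cocone (arrowDiagram τ)) : Cocone F where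
  pt := s.pt.left
  ι :=
    { app := fun a => (s.ι.app a).left
      naturality := fun a a' φ => by
        have h := congrArg CommaMorphism.left (s.ι.naturality φ)
        exact h }

/-- The auxiliary right cocone on `G` obtained from a cocone on `arrowDiagram τ`. -/
@[simps]
def rightCocone (τ : F ⟶ G) (s : Cocone (arrowDiagram τ)) : Cocone G where
  pt := s.pt.right
  ι :=
    { app := fun a => (s.ι.app a).right
      naturality := fun a a' φ => by
        have h := congrArg CommaMorphism.right (s.ι.naturality φ)
        exact h }

/-- The arrow cocone is a colimit when the two component cocones are. -/
def arrowIsColimit (τ : F ⟶ G) (cF : Cocone F) (cG : Cocone G)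
    (hF : IsColimit cF) (hG : IsColimit cG) : IsColimit (arrowCocone τ cF cG hF) where
  desc s := Arrow.homMk (u := hF.desc (leftCocone τ s)) (v := hG.desc (rightCocone τ s))
    (by
      apply hF.hom_ext
      intro a
      have h1 := (s.ι.app a).w
      have h2 : cF.ι.app a ≫ hF.desc ((Cocone.precompose τ).obj cG)
          = τ.app a ≫ cG.ι.app a := by simpa using hF.fac ((Cocone.precompose τ).obj cG) a
      show cF.ι.app a ≫ (hF.desc (leftCocone τ s) ≫ s.pt.hom) =
        cF.ι.app a ≫ (hF.desc ((Cocone.precompose τ).obj cG) ≫ hG.desc (rightCocone τ s))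
      have e1 : cF.ι.app a ≫ hF.desc (leftCocone τ s) ≫ s.pt.hom
          = (s.ι.app a).left ≫ s.pt.hom :=
        (Category.assoc _ _ _).symm.trans (congrArg (· ≫ s.pt.hom) (hF.fac (leftCocone τ s) a))
      have e2 : cF.ι.app a ≫ hF.desc ((Cocone.precompose τ).obj cG) ≫ hG.desc (rightCocone τ s)
          = τ.app a ≫ (s.ι.app a).right :=
        (Category.assoc _ _ _).symm.trans ((congrArg (· ≫ hG.desc (rightCocone τ s)) h2).trans
          ((Category.assoc _ _ _).trans (congrArg (τ.app a ≫ ·) (hG.fac (rightCocone τ s) a))))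
      exact e1.trans (h1.trans e2.symm))
  fac s a := by
    apply Arrow.hom_ext
    · exact hF.fac (leftCocone τ s) a
    · exact hG.fac (rightCocone τ s) a
  uniq s m hm := by
    apply Arrow.hom_ext
    · refine hF.uniq (leftCocone τ s) m.left (fun a => ?_)
      have := congrArg CommaMorphism.left (hm a)
      exact this
    · refine hG.uniq (rightCocone τ s) m.right (fun a => ?_)
      have := congrArg CommaMorphism.right (hm a)
      exact this

end Aux

/-- Let `M` be a combinatorial model category and `κ` a sufficiently
large regular cardinal, in the sense that `M` admits `κ`-accessible functorial
factorizations and a small set of generating cofibrations with `κ`-presentable domains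
and codomains. Then `κ`-filtered colimits in `M` preserve weak equivalences. -/
theorem statement17 (κ : Cardinal.{v}) (hκ : κ.IsRegular)
    (hLP : IsLocallyPresentableCat κ C) (M : ModelStructure C)
    (I : MorphismProperty C) (hIsmall : MorphismPropertyIsSmall I)
    (hIgen : ∀ ⦃Q R : C⦄ (c : Q ⟶ R), M.Cof c ↔ cofClass I c)
    (hIpres : ∀ ⦃Q R : C⦄ (c : Q ⟶ R), I c →
      IsPresentableObj κ Q ∧ IsPresentableObj κ R)
    (fact₁ : MorphismProperty.FunctorialFactorizationData
      (fun X Y (f : X ⟶ Y) => M.Cof f ∧ M.W f : MorphismProperty C) M.Fib)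
    (fact₂ : MorphismProperty.FunctorialFactorizationData
      M.Cof (fun X Y (f : X ⟶ Y) => M.Fib f ∧ M.W f : MorphismProperty C))
    (hacc₁ : ∀ (J : Type v) [SmallCategory J], IsCardinalFiltered J κ →
      Nonempty (PreservesColimitsOfShape J fact₁.Z))
    (hacc₂ : ∀ (J : Type v) [SmallCategory J], IsCardinalFiltered J κ →
      Nonempty (PreservesColimitsOfShape J fact₂.Z)) :
    ∀ (A : Type v) [SmallCategory A], IsCardinalFiltered A κ →
      ∀ (F G : A ⥤ C) (τ : F ⟶ G) (cF : Cocone F) (cG : Cocone G)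
        (hF : IsColimit cF) (_hG : IsColimit cG),
        (∀ a : A, M.W (τ.app a)) →
        M.W (hF.desc ((Cocone.precompose τ).obj cG)) := by
  intro A _ hA F G τ cF cG hF hG hτ
  -- the colimit comparison arrow
  set fcol := hF.desc ((Cocone.precompose τ).obj cG) with hfcol
  -- the functorial factorization applied to the colimit arrow
  haveI : PreservesColimitsOfShape A fact₁.Z := (hacc₁ A hA).some
  have hZ : IsColimit (fact₁.Z.mapCocone (arrowCocone τ cF cG hF)) :=
    isColimitOfPreserves fact₁.Z (arrowIsColimit τ cF cG hF hG)
  let icol : cF.pt ⟶ fact₁.Z.obj (Arrow.mk fcol) := fact₁.i.app (Arrow.mk fcol)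
  let pcol : fact₁.Z.obj (Arrow.mk fcol) ⟶ cG.pt := fact₁.p.app (Arrow.mk fcol)
  have hfac : icol ≫ pcol = fcol := fact₁.fac_app
  have hWi : M.W icol := (fact₁.hi (Arrow.mk fcol)).2
  -- the natural transformation of `p`-components over `A`
  let pN : (arrowDiagram τ ⋙ fact₁.Z) ⟶ G :=
    { app := fun a => fact₁.p.app ((arrowDiagram τ).obj a)
      naturality := fun a a' φ => fact₁.p.naturality ((arrowDiagram τ).map φ) }
  -- each component of `pN` is a trivial fibration, hence in `injClass I`
  have hpInj : ∀ a, injClass I (pN.app a) := by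
    intro a
    have hFib : M.Fib (pN.app a) := fact₁.hp ((arrowDiagram τ).obj a)
    have hWp : M.W (pN.app a) := by
      have hiW : M.W (fact₁.i.app ((arrowDiagram τ).obj a)) :=
        (fact₁.hi ((arrowDiagram τ).obj a)).2
      have hcomp : fact₁.i.app ((arrowDiagram τ).obj a) ≫ pN.app a = τ.app a :=
        fact₁.fac_app
      exact M.w_cancel_left _ _ hiW (by rw [hcomp]; exact hτ a)
    intro X Y g hg
    have hCof : M.Cof g := (hIgen g).mpr (fun _ _ q hq => hq g hg)
    exact M.lift_cof_trivFib g (pN.app a) hCof hFib hWp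
  -- compatibility of `pcol` with the colimit cocones
  have hcomm : ∀ a, (fact₁.Z.mapCocone (arrowCocone τ cF cG hF)).ι.app a ≫ pcol
      = pN.app a ≫ cG.ι.app a := by
    intro a
    exact fact₁.p.naturality ((arrowCocone τ cF cG hF).ι.app a)
  -- hence `pcol` is in `injClass I`, so a trivial fibration
  have hinj : injClass I pcol :=
    injClass_of_colimit hκ I hIpres hA pN (fact₁.Z.mapCocone (arrowCocone τ cF cG hF)) cG
      hZ hG hpInj hcomm
  have hWpcol : M.W pcol := (fib_w_of_injClass M I hIgen pcol hinj).2
  have : M.W (icol ≫ pcol) := M.w_comp icol pcol hWi hWpcol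
  rwa [hfac] at this

end Paper
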